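/- arXiv:2005.06781 — 2 statements merged into one kernel-verified Lean document; each statement's English description precedes it below -/
import Mathlib

section
/- For every S₀ > 0 and I₀ > 0, there exists a unique S∞ ∈ (0, S₀) with S∞ ≤ μ/α such that (α/μ)S∞ - ln(S∞) = (α/μ)S₀ - ln(S₀) + (α/μ)I₀. More generally, there is a unique solution S∞ of this equation satisfying S∞ ≤ S₀. -/
/-- For every S₀ > 0 and I₀ > 0, there exists a unique S∞ ∈ (0, S₀) with
S∞ ≤ μ/α such that (α/μ)S∞ - ln S∞ = (α/μ)S₀ - ln S₀ + (α/μ)I₀; more generally there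
is a unique solution with S∞ ≤ S₀. -/
theorem stmt2 (α μ : ℝ) (hα : 0 < α) (hμ : 0 < μ)
    (S₀ I₀ : ℝ) (hS₀ : 0 < S₀) (hI₀ : 0 < I₀) :
    (∃! S : ℝ, (S ∈ Set.Ioo 0 S₀ ∧ S ≤ μ / α) ∧
      (α / μ) * S - Real.log S = (α / μ) * S₀ - Real.log S₀ + (α / μ) * I₀) ∧
    (∃! S : ℝ, (0 < S ∧ S ≤ S₀) ∧
      (α / μ) * S - Real.log S = (α / μ) * S₀ - Real.log S₀ + (α / μ) * I₀) := by
  set r := α / μ with hr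
  have hrpos : 0 < r := div_pos hα hμ
  set f : ℝ → ℝ := fun x => r * x - Real.log x with hf
  set c : ℝ := r * S₀ - Real.log S₀ + r * I₀ with hc
  have hinvr : μ / α = r⁻¹ := by rw [hr]; field_simp
  have hripos : 0 < (r⁻¹ : ℝ) := inv_pos.2 hrpos
  -- derivative
  have hderiv : ∀ x : ℝ, 0 < x → HasDerivAt f (r - 1/x) x := by
    intro x hx
    have h1 : HasDerivAt (fun x : ℝ => r * x) r x := by
      simpa using (hasDerivAt_id x).const_mul r
    rw [one_div]; exact h1.sub (Real.hasDerivAt_log hx.ne')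
  have hcont : ∀ s : Set ℝ, (∀ x ∈ s, (0:ℝ) < x) → ContinuousOn f s := by
    intro s hs
    exact (continuousOn_const.mul continuousOn_id).sub
      (Real.continuousOn_log.mono (fun x hx => (hs x hx).ne'))
  -- strict anti on Ioc 0 r⁻¹
  have hanti : StrictAntiOn f (Set.Ioc 0 r⁻¹) := by
    apply strictAntiOn_of_deriv_neg (convex_Ioc 0 r⁻¹)
      (hcont _ (fun x hx => hx.1))
    intro x hx
    rw [interior_Ioc] at hx
    rw [(hderiv x hx.1).deriv]
    have : r < 1 / x := by
      rw [lt_div_iff₀ hx.1]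
      calc r * x < r * r⁻¹ := by exact mul_lt_mul_of_pos_left hx.2 hrpos
        _ = 1 := mul_inv_cancel₀ hrpos.ne'
    linarith
  -- monotone on Ici r⁻¹
  have hmono : MonotoneOn f (Set.Ici r⁻¹) := by
    apply monotoneOn_of_deriv_nonneg (convex_Ici r⁻¹)
      (hcont _ (fun x hx => lt_of_lt_of_le hripos hx))
    · intro x hx
      rw [interior_Ici] at hx
      exact (hderiv x (lt_trans hripos hx)).differentiableAt.differentiableWithinAt
    · intro x hx
      rw [interior_Ici] at hx
      have hx0 : 0 < x := lt_trans hripos hx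
      rw [(hderiv x hx0).deriv]
      have : 1 / x ≤ r := by
        rw [div_le_iff₀ hx0]
        calc 1 = r * r⁻¹ := (mul_inv_cancel₀ hrpos.ne').symm
          _ ≤ r * x := mul_le_mul_of_nonneg_left hx.le hrpos.le
      linarith
  have hfS₀c : f S₀ < c := by
    have : 0 < r * I₀ := mul_pos hrpos hI₀
    simp only [hf, hc]; linarith
  set m : ℝ := min S₀ r⁻¹ with hm
  have hmpos : 0 < m := lt_min hS₀ hripos
  have hfm : f m ≤ f S₀ := by
    rcases le_total S₀ r⁻¹ with h | h
    · rw [hm, min_eq_left h]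
    · rw [hm, min_eq_right h]
      exact hmono (Set.mem_Ici.2 le_rfl) (Set.mem_Ici.2 h) h
  set a : ℝ := min m (Real.exp (-c)) with ha
  have hapos : 0 < a := lt_min hmpos (Real.exp_pos _)
  have ham : a ≤ m := min_le_left _ _
  have hfa : c < f a := by
    have hla : Real.log a ≤ -c := by
      calc Real.log a ≤ Real.log (Real.exp (-c)) :=
            Real.log_le_log hapos (min_le_right _ _)
        _ = -c := Real.log_exp _
    have : 0 < r * a := mul_pos hrpos hapos
    simp only [hf]; linarith
  -- IVT
  obtain ⟨S, hSmem, hfS⟩ :=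
    intermediate_value_Icc' ham (hcont _ (fun x hx => lt_of_lt_of_le hapos hx.1))
      (Set.mem_Icc.2 ⟨le_of_lt (lt_of_le_of_lt hfm hfS₀c), hfa.le⟩)
  have hSpos : 0 < S := lt_of_lt_of_le hapos hSmem.1
  have hSm : S < m := lt_of_le_of_ne hSmem.2 (by
    intro h; rw [h] at hfS
    exact absurd hfS (by have := lt_of_le_of_lt hfm hfS₀c; linarith))
  have hSlt : S < S₀ := lt_of_lt_of_le hSm (min_le_left _ _)
  have hSle : S ≤ μ / α := by rw [hinvr]; exact le_of_lt (lt_of_lt_of_le hSm (min_le_right _ _))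
  -- uniqueness
  have huniq : ∀ T : ℝ, 0 < T → T ≤ S₀ → f T = c → T = S := by
    intro T hT hTS₀ hfT
    have hTr : T ≤ r⁻¹ := by
      by_contra h
      push_neg at h
      have h1 : f T ≤ f S₀ := hmono (Set.mem_Ici.2 h.le)
        (Set.mem_Ici.2 (le_trans h.le hTS₀)) hTS₀
      rw [hfT] at h1
      linarith
    exact hanti.injOn (Set.mem_Ioc.2 ⟨hT, hTr⟩)
      (Set.mem_Ioc.2 ⟨hSpos, le_of_lt (lt_of_lt_of_le hSm (min_le_right _ _))⟩)
      (hfS.symm ▸ hfT)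
  constructor
  · refine ⟨S, ⟨⟨⟨hSpos, hSlt⟩, hSle⟩, hfS⟩, ?_⟩
    rintro y ⟨⟨⟨hy0, hyS₀⟩, _⟩, hyeq⟩
    exact huniq y hy0 hyS₀.le hyeq
  · refine ⟨S, ⟨⟨hSpos, hSlt.le⟩, hfS⟩, ?_⟩
    rintro y ⟨⟨hy0, hyS₀⟩, hyeq⟩
    exact huniq y hy0 hyS₀ hyeq
end

section
/- Fix S₀ > μ/α and let S* < S₀ be the unique solution in (0, μ/α) of f(S*) = f(S₀), where f(x) = (α/μ)x - ln x. For I₀ > 0 let S∞(I₀) be the unique solution of f(S∞) = f(S₀) + (α/μ)I₀ with S∞ ≤ S₀. Then S∞(I₀) → S* as I₀ → 0⁺; in particular there is ε > 0 such that S∞(I₀) ≤ S₀ - ε for all I₀ > 0. -/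
/-- Fix S₀ > μ/α and let S* ∈ (0, μ/α) be the unique solution of
f(S*) = f(S₀) with f(x) = (α/μ)x - ln x. If S∞(I₀) is the solution of
f(S∞) = f(S₀) + (α/μ)I₀ with S∞ ≤ S₀, then S∞(I₀) → S* as I₀ → 0⁺; in particular
there is ε > 0 with S∞(I₀) ≤ S₀ - ε for all I₀ > 0. -/
theorem stmt4 (α μ S₀ Sstar : ℝ) (hα : 0 < α) (hμ : 0 < μ) (hS₀ : μ / α < S₀)
    (hSstar : Sstar ∈ Set.Ioo 0 (μ / α))
    (hfSstar : (α / μ) * Sstar - Real.log Sstar = (α / μ) * S₀ - Real.log S₀)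
    (Sinf : ℝ → ℝ)
    (hSinf : ∀ I₀ > (0 : ℝ), (0 < Sinf I₀ ∧ Sinf I₀ ≤ S₀) ∧
      (α / μ) * Sinf I₀ - Real.log (Sinf I₀)
        = ((α / μ) * S₀ - Real.log S₀) + (α / μ) * I₀) :
    Filter.Tendsto Sinf (nhdsWithin 0 (Set.Ioi 0)) (nhds Sstar) ∧
    ∃ ε > (0 : ℝ), ∀ I₀ > (0 : ℝ), Sinf I₀ ≤ S₀ - ε := by
  set f : ℝ → ℝ := fun x => α / μ * x - Real.log x with hf
  have hαμ : (0:ℝ) < α / μ := div_pos hα hμ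
  have hμα : (0:ℝ) < μ / α := div_pos hμ hα
  -- strictly decreasing on Ioc 0 (μ/α)
  have hanti : StrictAntiOn f (Set.Ioc 0 (μ / α)) := by
    apply strictAntiOn_of_deriv_neg (convex_Ioc _ _)
    · exact (continuousOn_const.mul continuousOn_id).sub
        (Real.continuousOn_log.mono (fun x hx => by simp [ne_of_gt hx.1]))
    · intro x hx
      rw [interior_Ioc] at hx
      have hd : HasDerivAt f (α / μ - x⁻¹) x := by
        have h := ((hasDerivAt_id x).const_mul (α / μ)).sub (Real.hasDerivAt_log hx.1.ne')
        rw [mul_one] at h; exact h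
      rw [hd.deriv]
      have : (μ / α)⁻¹ < x⁻¹ := inv_strictAnti₀ hx.1 hx.2
      rw [inv_div] at this
      linarith
  -- strictly increasing on Icc (μ/α) S₀
  have hmono : StrictMonoOn f (Set.Icc (μ / α) S₀) := by
    apply strictMonoOn_of_deriv_pos (convex_Icc _ _)
    · exact (continuousOn_const.mul continuousOn_id).sub
        (Real.continuousOn_log.mono (fun x hx => by
          have : (0:ℝ) < x := lt_of_lt_of_le hμα hx.1
          simp [ne_of_gt this]))
    · intro x hx
      rw [interior_Icc] at hx
      have hx0 : (0:ℝ) < x := lt_trans hμα hx.1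
      have hd : HasDerivAt f (α / μ - x⁻¹) x := by
        have h := ((hasDerivAt_id x).const_mul (α / μ)).sub (Real.hasDerivAt_log hx0.ne')
        rw [mul_one] at h; exact h
      rw [hd.deriv]
      have : x⁻¹ < (μ / α)⁻¹ := inv_strictAnti₀ hμα hx.1
      rw [inv_div] at this
      linarith
  obtain ⟨hSs0, hSsμα⟩ := hSstar
  -- key: Sinf I₀ < Sstar for all I₀ > 0
  have hkey : ∀ I₀ > (0:ℝ), Sinf I₀ < Sstar := by
    intro I₀ hI
    obtain ⟨⟨hpos, hle⟩, heq⟩ := hSinf I₀ hI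
    have hfgt : f Sstar < f (Sinf I₀) := by
      have : f (Sinf I₀) = f Sstar + α / μ * I₀ := by
        simp only [hf]; rw [heq, hfSstar]
      rw [this]
      nlinarith [mul_pos hαμ hI]
    by_contra h
    push_neg at h
    rcases le_or_gt (Sinf I₀) (μ / α) with hc | hc
    · rcases eq_or_lt_of_le h with rfl | hlt
      · exact lt_irrefl _ hfgt
      · have := hanti ⟨hSs0, le_of_lt hSsμα⟩ ⟨hpos, hc⟩ hlt
        linarith
    · have h1 : f (Sinf I₀) ≤ f S₀ :=
        hmono.monotoneOn ⟨le_of_lt hc, hle⟩ ⟨le_of_lt hS₀, le_refl _⟩ hle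
      have h2 : f S₀ = f Sstar := by simp only [hf]; rw [hfSstar]
      linarith
  have hSsS₀ : Sstar < S₀ := lt_trans hSsμα hS₀
  constructor
  · rw [Metric.tendsto_nhdsWithin_nhds]
    intro δ hδ
    set δ' := min δ (Sstar / 2) with hδ'def
    have hδ'pos : 0 < δ' := lt_min hδ (by linarith)
    have hδ'le : δ' ≤ δ := min_le_left _ _
    have hδ'lt : δ' < Sstar := lt_of_le_of_lt (min_le_right _ _) (by linarith)
    have hmem1 : Sstar - δ' ∈ Set.Ioc 0 (μ / α) := ⟨by linarith, by linarith⟩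
    have hmem2 : Sstar ∈ Set.Ioc 0 (μ / α) := ⟨hSs0, le_of_lt hSsμα⟩
    have hc : 0 < f (Sstar - δ') - f Sstar := by
      have := hanti hmem1 hmem2 (by linarith)
      linarith
    obtain ⟨c, hcdef⟩ : ∃ c, c = f (Sstar - δ') - f Sstar := ⟨_, rfl⟩
    rw [← hcdef] at hc
    refine ⟨μ / α * c, mul_pos hμα hc, ?_⟩
    intro x hx hdx
    have hx0 : (0:ℝ) < x := hx
    rw [Real.dist_eq, sub_zero, abs_of_pos hx0] at hdx
    have hax : α / μ * x < c := by
      have h1 : α / μ * x < α / μ * (μ / α * c) := by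
        exact (mul_lt_mul_iff_right₀ hαμ).mpr hdx
      have h2 : α / μ * (μ / α * c) = c := by
        field_simp
      linarith
    obtain ⟨⟨hpos, hle⟩, heq⟩ := hSinf x hx0
    have hfeq : f (Sinf x) = f Sstar + α / μ * x := by
      simp only [hf]; rw [heq, hfSstar]
    have hlow : Sstar - δ' < Sinf x := by
      by_contra hcon
      push_neg at hcon
      have hgeq : f (Sstar - δ') ≤ f (Sinf x) := by
        rcases eq_or_lt_of_le hcon with heq2 | hlt2
        · rw [heq2]
        · exact le_of_lt (hanti ⟨hpos, le_trans hcon hmem1.2⟩ hmem1 hlt2)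
      rw [hfeq] at hgeq
      rw [hcdef] at hax
      linarith
    have hhigh : Sinf x < Sstar := hkey x hx0
    rw [Real.dist_eq, abs_lt]
    constructor <;> linarith
  · exact ⟨S₀ - Sstar, by linarith, fun I₀ hI => by have := hkey I₀ hI; linarith⟩
end
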